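/- Along a smooth one-parameter family of ξ-invariant positive conformal factors f_s, the derivative of the Einstein–Hilbert functional EH(f) = S_f / V_f^{n/(n+1)} satisfies (d/ds EH_{f_s})|_{s=0} = −(n/V_f^{n/(n+1)}) ∫_N (ḟ/f)( Scal(η_f) − S_f/V_f ) η_f∧(dη_f)^{[n]}. Consequently, a ξ-invariant compatible contact form η_f is a critical point of EH restricted to ξ-invariant conformal factors if and only if Scal(η_f) is constant. -/

import Mathlib

open MeasureTheory

/-- Along a smooth one-parameter family of ξ-invariant positive
conformal factors `f_s`, the Einstein–Hilbert functional
`EH(f) = S_f / V_f^{n/(n+1)}` satisfies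
`(d/ds EH_{f_s})|_{s=0} = −(n/V_f^{n/(n+1)}) ∫_N (ḟ/f)(Scal(η_f) − S_f/V_f) η_f∧(dη_f)^{[n]}`.
Consequently, `η_f` is a critical point of `EH` restricted to ξ-invariant
conformal factors if and only if `Scal(η_f)` is constant. Here
`μ = η∧(dη)^{[n]}`, the volume form of `η_f` is `f^{-1-n}·μ`,
`S = S_f`, `V = V_f`, `Sc = Scal(η_f)`, and the first variations of `S` and
`V` along the family are given as hypotheses. -/
theorem EH_first_variation_and_criticality
    {N : Type*} [TopologicalSpace N] [MeasurableSpace N] [OpensMeasurableSpace N]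
    (μ : Measure N) [IsFiniteMeasure μ] [μ.IsOpenPosMeasure]
    (n : ℕ) (hn : 0 < n)
    (f : N → ℝ) (hfc : Continuous f) (hf : ∀ x, 0 < f x)
    (Sc : N → ℝ) (hScc : Continuous Sc)   -- Scal(η_f)
    (S V : ℝ) (hVpos : 0 < V)
    (hS : S = ∫ x, Sc x / f x ^ (n + 1) ∂μ)
    (hV : V = ∫ x, 1 / f x ^ (n + 1) ∂μ)
    (fdot : N → ℝ)
    (Stot Vtot : ℝ → ℝ)
    (hS0 : Stot 0 = S) (hV0 : Vtot 0 = V)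
    (hSder : HasDerivAt Stot
        (-(n : ℝ) * ∫ x, (fdot x / f x) * Sc x / f x ^ (n + 1) ∂μ) 0)
    (hVder : HasDerivAt Vtot
        (-((n : ℝ) + 1) * ∫ x, (fdot x / f x) / f x ^ (n + 1) ∂μ) 0)
    (hI1 : Integrable (fun x => (fdot x / f x) * Sc x / f x ^ (n + 1)) μ)
    (hI2 : Integrable (fun x => (fdot x / f x) / f x ^ (n + 1)) μ) :
    HasDerivAt (fun s => Stot s / Vtot s ^ ((n : ℝ) / (n + 1)))
      (-(n : ℝ) / V ^ ((n : ℝ) / (n + 1))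
        * ∫ x, (fdot x / f x) * (Sc x - S / V) / f x ^ (n + 1) ∂μ) 0
    ∧ ((∀ g : N → ℝ, Continuous g →
          ∫ x, (g x / f x) * (Sc x - S / V) / f x ^ (n + 1) ∂μ = 0)
        ↔ ∃ c : ℝ, ∀ x, Sc x = c) := by
  have hVne : V ≠ 0 := hVpos.ne'
  have hn1 : ((n : ℝ) + 1) ≠ 0 := by positivity
  have hVI : Integrable (fun x => 1 / f x ^ (n + 1)) μ := by
    by_contra h
    rw [integral_undef h] at hV
    exact hVne hV
  have hWpos : (0:ℝ) < V ^ ((n : ℝ) / (n + 1)) :=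
    Real.rpow_pos_of_pos hVpos _
  have hWne : V ^ ((n : ℝ) / (n + 1)) ≠ 0 := hWpos.ne'
  constructor
  · -- first variation formula
    have hG : HasDerivAt (fun s => Vtot s ^ ((n : ℝ) / (n + 1)))
        ((-((n:ℝ)+1) * ∫ x, (fdot x / f x) / f x ^ (n + 1) ∂μ)
          * ((n : ℝ) / (n + 1)) * Vtot 0 ^ ((n : ℝ) / (n + 1) - 1)) 0 :=
      hVder.rpow_const (Or.inl (hV0 ▸ hVne))
    have hG0 : Vtot 0 ^ ((n : ℝ) / (n + 1)) ≠ 0 := by rw [hV0]; exact hWne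
    have hq := hSder.div hG hG0
    refine hq.congr_deriv ?_
    symm
    rw [hS0, hV0]
    have hint : ∫ x, (fdot x / f x) * (Sc x - S / V) / f x ^ (n + 1) ∂μ
        = (∫ x, (fdot x / f x) * Sc x / f x ^ (n + 1) ∂μ)
          - (S / V) * ∫ x, (fdot x / f x) / f x ^ (n + 1) ∂μ := by
      rw [show (fun x => (fdot x / f x) * (Sc x - S / V) / f x ^ (n + 1))
          = fun x => (fdot x / f x) * Sc x / f x ^ (n + 1)
              - (S / V) * ((fdot x / f x) / f x ^ (n + 1)) from
        funext fun x => by ring]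
      rw [integral_sub hI1 (hI2.const_mul _), integral_const_mul]
    rw [hint]
    have h2 : V ^ ((n : ℝ) / (n + 1) - 1) = V ^ ((n : ℝ) / (n + 1)) / V := by
      rw [Real.rpow_sub hVpos, Real.rpow_one]
    rw [h2]
    set W := V ^ ((n : ℝ) / (n + 1)) with hW
    set I1 := ∫ x, (fdot x / f x) * Sc x / f x ^ (n + 1) ∂μ
    set I2 := ∫ x, (fdot x / f x) / f x ^ (n + 1) ∂μ
    field_simp
    ring
  · constructor
    · intro hcrit
      refine ⟨S / V, fun x => ?_⟩
      set h : N → ℝ := fun x => Sc x - S / V with hh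
      have hhc : Continuous h := hScc.sub continuous_const
      have hdenpos : ∀ y, (0:ℝ) < 1 + h y ^ 2 := fun y => by positivity
      have hgc : Continuous (fun y => f y * (h y / (1 + h y ^ 2))) :=
        hfc.mul (hhc.div (continuous_const.add (hhc.pow 2)) fun y => (hdenpos y).ne')
      have h0 := hcrit _ hgc
      set F : N → ℝ := fun y => h y ^ 2 / ((1 + h y ^ 2) * f y ^ (n + 1)) with hF
      have hFeq : ∀ y, (f y * (h y / (1 + h y ^ 2)) / f y) * (Sc y - S / V) / f y ^ (n + 1) = F y := by
        intro y
        have hfy : f y ≠ 0 := (hf y).ne'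
        have hden : (1 + h y ^ 2) ≠ 0 := (hdenpos y).ne'
        have hfp : f y ^ (n + 1) ≠ 0 := pow_ne_zero _ hfy
        have hsc : Sc y - S / V = h y := rfl
        show f y * (h y / (1 + h y ^ 2)) / f y * (Sc y - S / V) / f y ^ (n + 1)
            = h y ^ 2 / ((1 + h y ^ 2) * f y ^ (n + 1))
        rw [hsc]
        field_simp [hfy, hden, hfp]
      rw [show (fun y => f y * (h y / (1 + h y ^ 2)) / f y * (Sc y - S / V) / f y ^ (n + 1)) = F
        from funext hFeq] at h0
      have hFc : Continuous F := (hhc.pow 2).div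
        ((continuous_const.add (hhc.pow 2)).mul (hfc.pow (n+1)))
        (fun y => by have := hf y; have := hdenpos y; positivity)
      have hFnn : ∀ y, 0 ≤ F y := fun y => by
        have := hf y; have := hdenpos y; positivity
      have hFint : Integrable F μ := by
        refine hVI.mono' hFc.aestronglyMeasurable (Filter.Eventually.of_forall fun y => ?_)
        rw [Real.norm_eq_abs, abs_of_nonneg (hFnn y)]
        have hfy : (0:ℝ) < f y ^ (n+1) := by have := hf y; positivity
        have hb : h y ^ 2 / (1 + h y ^ 2) ≤ 1 := by
          rw [div_le_one (hdenpos y)]; linarith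
        have : F y = (h y ^ 2 / (1 + h y ^ 2)) * (1 / f y ^ (n + 1)) := by
          simp only [hF]; field_simp
        rw [this]
        calc (h y ^ 2 / (1 + h y ^ 2)) * (1 / f y ^ (n + 1))
            ≤ 1 * (1 / f y ^ (n + 1)) :=
              mul_le_mul_of_nonneg_right hb (by positivity)
          _ = 1 / f y ^ (n + 1) := one_mul _
      have hae : F =ᵐ[μ] 0 :=
        (integral_eq_zero_iff_of_nonneg (fun y => hFnn y) hFint).mp h0
      have hFzero : F = 0 := (Continuous.ae_eq_iff_eq μ hFc continuous_const).mp hae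
      have hFx : F x = 0 := by
        have := congrFun hFzero x
        simpa using this
      have hden : (1 + h x ^ 2) * f x ^ (n + 1) ≠ 0 := by
        have := hf x; have := hdenpos x; positivity
      have : h x ^ 2 = 0 := by
        have := div_eq_zero_iff.mp hFx
        tauto
      have hx0 : h x = 0 := by nlinarith [sq_nonneg (h x)]
      have : Sc x - S / V = 0 := hx0
      linarith
    · rintro ⟨c, hc⟩ g hgc
      have hSc : S = c * V := by
        rw [hS, hV, ← integral_const_mul]
        exact integral_congr_ae (Filter.Eventually.of_forall fun x => by simp [hc x, div_eq_mul_inv])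
      have hSV : S / V = c := by rw [hSc, mul_div_assoc, div_self hVne, mul_one]
      simp only [hc, hSV, sub_self, mul_zero, zero_div, integral_zero]
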